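/- Let p be a prime, A a commutative ring of characteristic p, n ≥ 1, and b₁, …, b_N ∈ Wₙ(A) truncated Witt vectors of length n. If the images of b₁, …, b_N under the natural projection Wₙ(A) → A (given by the 0-th Witt coefficient, which is a ring homomorphism, corresponding to the restriction R^{n−1} : Wₙ(A) → W₁(A) ≅ A) form a regular sequence in A, then b₁, …, b_N form a regular sequence in Wₙ(A). In particular, the Teichmüller lifts of a regular sequence of A form a regular sequence of Wₙ(A). -/
import Mathlib

open Pointwise Function RingTheory.Sequence

set_option linter.unusedSectionVars false
set_option linter.unnecessarySimpa false

universe u v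

open Pointwise Function RingTheory.Sequence

section General
variable {R : Type u} [CommRing R]

lemma aux_wr_of_subsingleton (rs : List R) :
    ∀ {M : Type v} [AddCommGroup M] [Module R M] [Subsingleton M], IsWeaklyRegular M rs := by
  induction rs with
  | nil => intro M _ _ _; exact IsWeaklyRegular.nil R M
  | cons r rs ih =>
    intro M _ _ _
    refine (isWeaklyRegular_cons_iff M r rs).mpr ⟨fun a b _ => Subsingleton.elim a b, ?_⟩
    haveI : Subsingleton (QuotSMulTop r M) :=
      (Submodule.mkQ_surjective _).subsingleton
    exact ih

lemma aux_map_injective {M M' M'' : Type v} [AddCommGroup M] [Module R M]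
    [AddCommGroup M'] [Module R M'] [AddCommGroup M''] [Module R M'']
    {r : R} {f : M →ₗ[R] M'} {g : M' →ₗ[R] M''} (hf : Injective f)
    (hfg : Exact f g) (hr : IsSMulRegular M'' r) :
    Injective (QuotSMulTop.map r f) := by
  rw [injective_iff_map_eq_zero]
  intro a ha
  obtain ⟨x, rfl⟩ := Submodule.mkQ_surjective _ a
  rw [Submodule.mkQ_apply, QuotSMulTop.map_apply_mk, Submodule.Quotient.mk_eq_zero] at ha
  obtain ⟨m, -, hm⟩ := ha
  have hm' : r • m = f x := hm
  have hgm : g m = 0 := by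
    apply hr
    show r • g m = r • (0 : M'')
    rw [smul_zero, ← map_smul, hm', hfg.apply_apply_eq_zero]
  obtain ⟨m₁, rfl⟩ := (hfg m).mp hgm
  rw [← map_smul] at hm'
  rw [Submodule.mkQ_apply, Submodule.Quotient.mk_eq_zero]
  exact ⟨m₁, trivial, hf hm'⟩

lemma aux_wr_of_exact (rs : List R) :
    ∀ {M M' M'' : Type v} [AddCommGroup M] [Module R M]
      [AddCommGroup M'] [Module R M'] [AddCommGroup M''] [Module R M'']
      (f : M →ₗ[R] M') (g : M' →ₗ[R] M''), Injective f → Surjective g → Exact f g →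
      IsWeaklyRegular M rs → IsWeaklyRegular M'' rs → IsWeaklyRegular M' rs := by
  induction rs with
  | nil => intro M M' M'' _ _ _ _ _ _ _ _ _ _ _ _ _; exact IsWeaklyRegular.nil R M'
  | cons r rs ih =>
    intro M M' M'' _ _ _ _ _ _ f g hf hg hfg h1 h3
    rw [isWeaklyRegular_cons_iff] at h1 h3 ⊢
    refine ⟨?_, ?_⟩
    · intro a b hab
      have hab' : r • a = r • b := hab
      have hz : r • (a - b) = 0 := by rw [smul_sub, hab', sub_self]
      have hgz : g (a - b) = 0 := by
        apply h3.1
        show r • g (a - b) = r • (0 : M'')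
        rw [smul_zero, ← map_smul, hz, map_zero]
      obtain ⟨w, hw⟩ := (hfg _).mp hgz
      have hw0 : w = 0 := by
        apply h1.1
        show r • w = r • (0 : M)
        apply hf
        rw [map_smul, hw, hz, smul_zero, map_zero]
      rw [hw0, map_zero] at hw
      exact sub_eq_zero.mp hw.symm
    · exact ih (QuotSMulTop.map r f) (QuotSMulTop.map r g)
        (aux_map_injective hf hfg h3.1) (QuotSMulTop.map_surjective r hg)
        (QuotSMulTop.map_exact r hfg hg) h1.2 h3.2

end General

section Pow
variable {R : Type u} [CommRing R]

lemma aux_quot_pow {M : Type v} [AddCommGroup M] [Module R M] (r : R) (hr : IsSMulRegular M r)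
    (ts : List R) (h : IsWeaklyRegular (QuotSMulTop r M) ts) :
    ∀ e, IsWeaklyRegular (QuotSMulTop (r ^ e) M) ts := by
  intro e
  induction e with
  | zero =>
    haveI : Subsingleton (QuotSMulTop (r ^ 0) M) :=
      Submodule.Quotient.subsingleton_iff.mpr (by rw [pow_zero, one_smul])
    exact aux_wr_of_subsingleton ts
  | succ e ihe =>
    have hle : (r ^ (e + 1) • ⊤ : Submodule R M) ≤ r ^ e • ⊤ := by
      rintro x ⟨y, -, rfl⟩
      refine ⟨r • y, trivial, ?_⟩
      show r ^ e • (r • y) = r ^ (e + 1) • y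
      rw [smul_smul, ← pow_succ]
    have hcomap : (r • ⊤ : Submodule R M) ≤
        Submodule.comap (r ^ e • (LinearMap.id : M →ₗ[R] M)) (r ^ (e + 1) • ⊤ : Submodule R M) := by
      rintro x ⟨y, -, rfl⟩
      refine ⟨y, trivial, ?_⟩
      show r ^ (e + 1) • y = r ^ e • (r • y)
      rw [smul_smul, ← pow_succ]
    set f : QuotSMulTop r M →ₗ[R] QuotSMulTop (r ^ (e + 1)) M :=
      Submodule.mapQ _ _ (r ^ e • (LinearMap.id : M →ₗ[R] M)) hcomap with hfdef
    set g : QuotSMulTop (r ^ (e + 1)) M →ₗ[R] QuotSMulTop (r ^ e) M :=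
      Submodule.mapQ _ _ (LinearMap.id : M →ₗ[R] M) (by simpa using hle) with hgdef
    have hfmk : ∀ x : M, f (Submodule.Quotient.mk x) = Submodule.Quotient.mk (r ^ e • x) := by
      intro x; rfl
    have hgmk : ∀ x : M, g (Submodule.Quotient.mk x) = Submodule.Quotient.mk x := by
      intro x; rfl
    have hf : Injective f := by
      rw [injective_iff_map_eq_zero]
      intro a ha
      obtain ⟨x, rfl⟩ := Submodule.mkQ_surjective _ a
      rw [Submodule.mkQ_apply, hfmk, Submodule.Quotient.mk_eq_zero] at ha
      obtain ⟨y, -, hy⟩ := ha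
      have hy' : r ^ e • (r • y) = r ^ e • x := by
        rw [smul_smul, ← pow_succ]; exact hy
      have : r • y = x := hr.pow e hy'
      rw [Submodule.mkQ_apply, Submodule.Quotient.mk_eq_zero]
      exact ⟨y, trivial, this⟩
    have hg : Surjective g := by
      intro a
      obtain ⟨x, rfl⟩ := Submodule.mkQ_surjective _ a
      exact ⟨Submodule.Quotient.mk x, rfl⟩
    have hfg : Exact f g := by
      intro a
      constructor
      · intro ha
        obtain ⟨x, rfl⟩ := Submodule.mkQ_surjective _ a
        rw [Submodule.mkQ_apply, hgmk, Submodule.Quotient.mk_eq_zero] at ha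
        obtain ⟨z, -, hz⟩ := ha
        refine ⟨Submodule.Quotient.mk z, ?_⟩
        rw [hfmk]
        exact congrArg Submodule.Quotient.mk hz
      · rintro ⟨c, rfl⟩
        obtain ⟨z, rfl⟩ := Submodule.mkQ_surjective _ c
        rw [Submodule.mkQ_apply, hfmk, hgmk, Submodule.Quotient.mk_eq_zero]
        exact ⟨z, trivial, rfl⟩
    exact aux_wr_of_exact ts f g hf hg hfg h ihe

lemma aux_wr_pow (rs : List R) (e : ℕ) :
    ∀ {M : Type v} [AddCommGroup M] [Module R M],
      IsWeaklyRegular M rs → IsWeaklyRegular M (rs.map (· ^ e)) := by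
  induction rs with
  | nil => intro M _ _ _; exact IsWeaklyRegular.nil R M
  | cons r rs ih =>
    intro M _ _ h
    rw [isWeaklyRegular_cons_iff] at h
    rw [List.map_cons, isWeaklyRegular_cons_iff]
    exact ⟨h.1.pow e, aux_quot_pow r h.1 _ (ih h.2) e⟩

end Pow


section Witt
set_option linter.unusedSectionVars false
variable {p : ℕ} [hp : Fact p.Prime] {A : Type*} [CommRing A] [CharP A p]

local notation "𝕎" => WittVector p

lemma aux_Vpow_coeff_lt (y : 𝕎 A) (k : ℕ) :
    ∀ i < k, (WittVector.verschiebung^[k] y).coeff i = 0 := by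
  induction k with
  | zero => intro i hi; omega
  | succ k ih =>
    intro i hi
    rw [Function.iterate_succ_apply']
    match i with
    | 0 => rw [WittVector.verschiebung_coeff_zero]
    | (j+1) => rw [WittVector.verschiebung_coeff_succ]; exact ih j (by omega)

lemma aux_eq_Vpow (x : 𝕎 A) (k : ℕ) (hx : ∀ i < k, x.coeff i = 0) :
    x = WittVector.verschiebung^[k] (WittVector.mk p fun j => x.coeff (j + k)) := by
  ext i
  rcases lt_or_ge i k with h | h
  · rw [aux_Vpow_coeff_lt _ k i h, hx i h]
  · obtain ⟨j, rfl⟩ : ∃ j, i = j + k := ⟨i - k, by omega⟩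
    rw [WittVector.iterate_verschiebung_coeff, WittVector.coeff_mk]

lemma aux_W_mul_coeff_lt (b x : 𝕎 A) (k : ℕ) (hx : ∀ i < k, x.coeff i = 0) :
    ∀ i < k, (b * x).coeff i = 0 := by
  intro i hi
  rw [aux_eq_Vpow x k hx, mul_comm, WittVector.iterate_verschiebung_mul_left,
    aux_Vpow_coeff_lt _ k i hi]

lemma aux_W_mul_coeff (b x : 𝕎 A) (k : ℕ) (hx : ∀ i < k, x.coeff i = 0) :
    (b * x).coeff k = b.coeff 0 ^ p ^ k * x.coeff k := by
  conv_lhs => rw [aux_eq_Vpow x k hx]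
  have h := WittVector.iterate_verschiebung_mul_coeff (p := p) b
    (WittVector.mk p fun j => x.coeff (j + k)) 0 k
  simpa [WittVector.coeff_mk] using h

lemma aux_W_add_coeff (x y : 𝕎 A) (k : ℕ) (hx : ∀ i < k, x.coeff i = 0)
    (hy : ∀ i < k, y.coeff i = 0) :
    (x + y).coeff k = x.coeff k + y.coeff k := by
  have hVc : ∀ z : 𝕎 A, (WittVector.verschiebung^[k] z).coeff k = z.coeff 0 := fun z => by
    simpa using WittVector.iterate_verschiebung_coeff z k 0
  rw [aux_eq_Vpow x k hx, aux_eq_Vpow y k hy, ← iterate_map_add, hVc, hVc, hVc,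
    WittVector.add_coeff_zero, WittVector.coeff_mk, WittVector.coeff_mk, zero_add]

end Witt


section WittTrunc
variable {p : ℕ} [hp : Fact p.Prime] {A : Type*} [CommRing A] [CharP A p] {n : ℕ}

local notation "𝕎" => WittVector p


lemma aux_out_vanish {k : ℕ} (x : TruncatedWittVector p n A)
    (hx : ∀ i : Fin n, (i : ℕ) < k → x.coeff i = 0) : ∀ i < k, x.out.coeff i = 0 := by
  intro i hi
  by_cases hin : i < n
  · rw [show (i : ℕ) = ((⟨i, hin⟩ : Fin n) : ℕ) from rfl, TruncatedWittVector.coeff_out]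
    exact hx ⟨i, hin⟩ hi
  · show (if h : i < n then x.coeff ⟨i, h⟩ else 0) = 0
    rw [dif_neg hin]

lemma aux_T_lift (x y : TruncatedWittVector p n A) :
    x * y = WittVector.truncateFun n (x.out * y.out) := by
  rw [WittVector.truncateFun_mul, TruncatedWittVector.truncateFun_out,
    TruncatedWittVector.truncateFun_out]

lemma aux_T_lift_add (x y : TruncatedWittVector p n A) :
    x + y = WittVector.truncateFun n (x.out + y.out) := by
  rw [WittVector.truncateFun_add, TruncatedWittVector.truncateFun_out,
    TruncatedWittVector.truncateFun_out]

lemma aux_T_mul_coeff (hn : 0 < n) {k : ℕ} (hk : k < n) (b x : TruncatedWittVector p n A)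
    (hx : ∀ i : Fin n, (i : ℕ) < k → x.coeff i = 0) :
    (b * x).coeff ⟨k, hk⟩ = b.coeff ⟨0, hn⟩ ^ p ^ k * x.coeff ⟨k, hk⟩ := by
  rw [aux_T_lift, WittVector.coeff_truncateFun,
    aux_W_mul_coeff b.out x.out k (aux_out_vanish x hx)]
  rw [show b.out.coeff 0 = b.coeff ⟨0, hn⟩ from TruncatedWittVector.coeff_out b ⟨0, hn⟩,
    show x.out.coeff k = x.coeff ⟨k, hk⟩ from TruncatedWittVector.coeff_out x ⟨k, hk⟩]

lemma aux_T_mul_coeff_lt {k : ℕ} (b x : TruncatedWittVector p n A)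
    (hx : ∀ i : Fin n, (i : ℕ) < k → x.coeff i = 0) :
    ∀ i : Fin n, (i : ℕ) < k → (b * x).coeff i = 0 := by
  intro i hi
  rw [aux_T_lift, WittVector.coeff_truncateFun]
  exact aux_W_mul_coeff_lt b.out x.out k (aux_out_vanish x hx) i hi

lemma aux_T_add_coeff {k : ℕ} (hk : k < n) (x y : TruncatedWittVector p n A)
    (hx : ∀ i : Fin n, (i : ℕ) < k → x.coeff i = 0)
    (hy : ∀ i : Fin n, (i : ℕ) < k → y.coeff i = 0) :
    (x + y).coeff ⟨k, hk⟩ = x.coeff ⟨k, hk⟩ + y.coeff ⟨k, hk⟩ := by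
  rw [aux_T_lift_add, WittVector.coeff_truncateFun,
    aux_W_add_coeff x.out y.out k (aux_out_vanish x hx) (aux_out_vanish y hy),
    show x.out.coeff k = x.coeff ⟨k, hk⟩ from TruncatedWittVector.coeff_out x ⟨k, hk⟩,
    show y.out.coeff k = y.coeff ⟨k, hk⟩ from TruncatedWittVector.coeff_out y ⟨k, hk⟩]

lemma aux_T_coeff_zero_mul (hn : 0 < n) (x y : TruncatedWittVector p n A) :
    (x * y).coeff ⟨0, hn⟩ = x.coeff ⟨0, hn⟩ * y.coeff ⟨0, hn⟩ := by
  rw [aux_T_lift, WittVector.coeff_truncateFun,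
    show (((⟨0, hn⟩ : Fin n) : ℕ)) = 0 from rfl, WittVector.mul_coeff_zero,
    show x.out.coeff 0 = x.coeff ⟨0, hn⟩ from TruncatedWittVector.coeff_out x ⟨0, hn⟩,
    show y.out.coeff 0 = y.coeff ⟨0, hn⟩ from TruncatedWittVector.coeff_out y ⟨0, hn⟩]

lemma aux_T_coeff_zero_add (hn : 0 < n) (x y : TruncatedWittVector p n A) :
    (x + y).coeff ⟨0, hn⟩ = x.coeff ⟨0, hn⟩ + y.coeff ⟨0, hn⟩ := by
  rw [aux_T_lift_add, WittVector.coeff_truncateFun,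
    show (((⟨0, hn⟩ : Fin n) : ℕ)) = 0 from rfl, WittVector.add_coeff_zero,
    show x.out.coeff 0 = x.coeff ⟨0, hn⟩ from TruncatedWittVector.coeff_out x ⟨0, hn⟩,
    show y.out.coeff 0 = y.coeff ⟨0, hn⟩ from TruncatedWittVector.coeff_out y ⟨0, hn⟩]

/-- The `k`-th power-of-Frobenius-twisted zeroth coefficient map as a ring hom. -/
noncomputable def auxPhi (hn : 0 < n) (k : ℕ) : TruncatedWittVector p n A →+* A where
  toFun x := x.coeff ⟨0, hn⟩ ^ p ^ k
  map_one' := by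
    show (1 : TruncatedWittVector p n A).coeff ⟨0, hn⟩ ^ p ^ k = 1
    have h1 : (1 : TruncatedWittVector p n A).coeff ⟨0, hn⟩ = 1 := by
      rw [show (1 : TruncatedWittVector p n A) = WittVector.truncateFun n 1 from
        (WittVector.truncateFun_one p n (R := A)).symm, WittVector.coeff_truncateFun,
        show (((⟨0, hn⟩ : Fin n) : ℕ)) = 0 from rfl, WittVector.one_coeff_zero]
    rw [h1, one_pow]
  map_mul' x y := by
    show (x * y).coeff ⟨0, hn⟩ ^ p ^ k = _ * _
    rw [aux_T_coeff_zero_mul hn, mul_pow]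
  map_zero' := by
    show (0 : TruncatedWittVector p n A).coeff ⟨0, hn⟩ ^ p ^ k = 0
    rw [TruncatedWittVector.coeff_zero, zero_pow (pow_ne_zero _ hp.out.ne_zero)]
  map_add' x y := by
    show (x + y).coeff ⟨0, hn⟩ ^ p ^ k = _ + _
    rw [aux_T_coeff_zero_add hn, add_pow_char_pow]

lemma auxPhi_apply (hn : 0 < n) (k : ℕ) (x : TruncatedWittVector p n A) :
    auxPhi hn k x = x.coeff ⟨0, hn⟩ ^ p ^ k := rfl

lemma aux_mem_ker {k : ℕ} (hkn : k ≤ n) (x : TruncatedWittVector p n A) :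
    x ∈ RingHom.ker (TruncatedWittVector.truncate hkn) ↔
      ∀ i : Fin n, (i : ℕ) < k → x.coeff i = 0 := by
  rw [RingHom.mem_ker]
  constructor
  · intro h i hi
    have := congrArg (fun z => TruncatedWittVector.coeff ⟨(i : ℕ), hi⟩ z) h
    simpa [TruncatedWittVector.coeff_truncate] using this
  · intro h
    apply TruncatedWittVector.ext
    intro i
    rw [TruncatedWittVector.coeff_truncate, TruncatedWittVector.coeff_zero]
    exact h _ (by simpa using i.isLt)

end WittTrunc


section Assemble
variable {p : ℕ} [hp : Fact p.Prime] {A : Type u} [CommRing A] [CharP A p] {n : ℕ}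

lemma aux_layer (hn : 0 < n) (bs : List (TruncatedWittVector p n A))
    (hbs : IsWeaklyRegular A (bs.map fun x => x.coeff ⟨0, hn⟩)) :
    ∀ d k (hk : k + d = n),
      IsWeaklyRegular
        (↥(RingHom.ker (TruncatedWittVector.truncate (p := p) (R := A) (n := k) (m := n) (Nat.le.intro hk)))) bs := by
  intro d
  induction d with
  | zero =>
    intro k hk
    haveI : Subsingleton
        (↥(RingHom.ker (TruncatedWittVector.truncate (p := p) (R := A) (n := k) (m := n) (Nat.le.intro hk)))) := by
      constructor
      intro a b
      apply Subtype.ext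
      apply TruncatedWittVector.ext
      intro i
      have hik : (i : ℕ) < k := by have := i.isLt; omega
      rw [(aux_mem_ker _ _).mp a.2 i hik, (aux_mem_ker _ _).mp b.2 i hik]
    exact aux_wr_of_subsingleton bs
  | succ d ih =>
    intro k hk
    have hk1 : (k + 1) + d = n := by omega
    have hkn : k < n := by omega
    set K1 : Ideal (TruncatedWittVector p n A) := RingHom.ker (TruncatedWittVector.truncate (p := p) (R := A) (n := k + 1) (m := n) (Nat.le.intro hk1))
    set K0 : Ideal (TruncatedWittVector p n A) := RingHom.ker (TruncatedWittVector.truncate (p := p) (R := A) (n := k) (m := n) (Nat.le.intro hk))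
    have hle : K1 ≤ K0 := by
      intro x hx
      rw [aux_mem_ker] at hx ⊢
      exact fun i hi => hx i (by omega)
    -- twisted module structure on A
    letI : Module (TruncatedWittVector p n A) A := Module.compHom A (auxPhi hn k)
    have hsmul : ∀ (b : TruncatedWittVector p n A) (a : A), b • a = auxPhi hn k b * a := fun b a => rfl
    -- the three maps
    set f : ↥K1 →ₗ[TruncatedWittVector p n A] ↥K0 := Submodule.inclusion hle with hfdef
    have hadd : ∀ x y : ↥K0,
        (x.1 + y.1).coeff ⟨k, hkn⟩ = x.1.coeff ⟨k, hkn⟩ + y.1.coeff ⟨k, hkn⟩ := fun x y =>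
      aux_T_add_coeff hkn x.1 y.1 ((aux_mem_ker _ _).mp x.2) ((aux_mem_ker _ _).mp y.2)
    have hsm : ∀ (b : TruncatedWittVector p n A) (x : ↥K0),
        (b * x.1).coeff ⟨k, hkn⟩ = auxPhi hn k b * x.1.coeff ⟨k, hkn⟩ := by
      intro b x
      rw [auxPhi_apply]
      exact aux_T_mul_coeff hn hkn b x.1 ((aux_mem_ker _ _).mp x.2)
    set g : ↥K0 →ₗ[TruncatedWittVector p n A] A :=
      { toFun := fun x => x.1.coeff ⟨k, hkn⟩
        map_add' := fun x y => hadd x y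
        map_smul' := fun b x => hsm b x } with hgdef
    have hf : Injective f := Submodule.inclusion_injective hle
    have hg : Surjective g := by
      intro a
      refine ⟨⟨TruncatedWittVector.mk p (fun i => if (i : ℕ) = k then a else 0), ?_⟩, ?_⟩
      · rw [aux_mem_ker]
        intro i hi
        rw [TruncatedWittVector.coeff_mk, if_neg (by omega)]
      · show (TruncatedWittVector.mk p fun i => if (i : ℕ) = k then a else 0).coeff ⟨k, hkn⟩ = a
        rw [TruncatedWittVector.coeff_mk, if_pos rfl]
    have hfg : Exact f g := by
      intro x
      constructor
      · intro hx
        have hx' : x.1.coeff ⟨k, hkn⟩ = 0 := hx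
        have hmem : x.1 ∈ K1 := by
          rw [aux_mem_ker]
          intro i hi
          rcases Nat.lt_or_ge (i : ℕ) k with h | h
          · exact (aux_mem_ker _ _).mp x.2 i h
          · have : (i : ℕ) = k := by omega
            have : i = (⟨k, hkn⟩ : Fin n) := Fin.ext this
            rw [this]; exact hx'
        exact ⟨⟨x.1, hmem⟩, rfl⟩
      · rintro ⟨y, rfl⟩
        show (y.1.coeff ⟨k, hkn⟩ : A) = 0
        exact (aux_mem_ker _ _).mp y.2 ⟨k, hkn⟩ (Nat.lt_succ_self k)
    -- weak regularity on the twisted quotient A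
    have hpow : IsWeaklyRegular A ((bs.map fun x => x.coeff ⟨0, hn⟩).map (· ^ p ^ k)) :=
      aux_wr_pow _ _ hbs
    have htarget : IsWeaklyRegular A bs := by
      refine (AddEquiv.isWeaklyRegular_congr (e := AddEquiv.refl A) ?_).mpr hpow
      rw [List.map_map]
      refine List.forall₂_map_right_iff.mpr (List.forall₂_same.mpr ?_)
      intro b _ a
      show b • a = ((b.coeff ⟨0, hn⟩) ^ p ^ k) * a
      rw [hsmul, auxPhi_apply]
    exact aux_wr_of_exact bs f g hf hg hfg (ih (k + 1) hk1) htarget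

end Assemble

/-- Let `p` be a prime, `A` a commutative ring of characteristic `p`, `n ≥ 1`, and
`b₁, …, b_N ∈ Wₙ(A)`.  If the images of the `bᵢ` under the 0-th coefficient map
`Wₙ(A) → A` form a regular sequence in `A`, then `b₁, …, b_N` form a regular sequence
in `Wₙ(A)`. -/
theorem truncatedWittVector_regular_sequence
    (p : ℕ) [Fact p.Prime] (A : Type*) [CommRing A] [CharP A p]
    (n : ℕ) (hn : 0 < n) (N : ℕ) (b : Fin N → TruncatedWittVector p n A)
    (hreg : RingTheory.Sequence.IsRegular A
      (List.ofFn fun i => (b i).coeff (⟨0, hn⟩ : Fin n))) :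
    RingTheory.Sequence.IsRegular (TruncatedWittVector p n A) (List.ofFn b) := by
  have hbs : IsWeaklyRegular A ((List.ofFn b).map fun x => x.coeff ⟨0, hn⟩) := by
    rw [List.map_ofFn]
    exact hreg.toIsWeaklyRegular
  have hlayer := aux_layer hn (List.ofFn b) hbs n 0 (Nat.zero_add n)
  have hK : RingHom.ker (TruncatedWittVector.truncate (p := p) (R := A) (n := 0) (m := n)
      (Nat.le.intro (Nat.zero_add n))) = (⊤ : Ideal (TruncatedWittVector p n A)) := by
    rw [eq_top_iff]
    intro x _
    rw [aux_mem_ker]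
    intro i hi
    omega
  constructor
  · -- weakly regular
    have e : (↥(RingHom.ker (TruncatedWittVector.truncate (p := p) (R := A) (n := 0) (m := n)
        (Nat.le.intro (Nat.zero_add n))))) ≃ₗ[TruncatedWittVector p n A]
        TruncatedWittVector p n A :=
      (LinearEquiv.ofEq _ _ hK) ≪≫ₗ Submodule.topEquiv
    exact (e.isWeaklyRegular_congr (List.ofFn b)).mp hlayer
  · -- top ≠ span • top
    intro htop
    apply hreg.top_ne_smul
    rw [smul_eq_mul, Ideal.mul_top] at htop ⊢
    have := congrArg (Ideal.map (auxPhi hn 0)) htop.symm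
    rw [Ideal.map_top, Ideal.map_ofList, List.map_ofFn] at this
    simpa [Function.comp_def, auxPhi_apply, pow_zero, pow_one, eq_comm] using this
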